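/- If ρ₁ and ρ₂ are density operators on the state space of a quantum Mealy machine and ρ = ρ₁ − ρ₂ satisfies tr(E_{a|π}(ρ)) = 0 for all input sequences π drawn from a spanning set B with |π| ≤ d²−1 and all output sequences a, then p(a|π,ρ₁) = p(a|π,ρ₂) for every input sequence π (of any length, with arbitrary input states) and output sequence a. -/

import Mathlib

open Matrix Kronecker ComplexOrder

/-- Partial trace over the first (input) factor. -/
noncomputable def ptraceIn {α β : Type*} [Fintype α]
    (A : Matrix (α × β) (α × β) ℂ) : Matrix β β ℂ :=
  fun s t => ∑ i, A (i, s) (i, t)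

/-- One-step super-operator `E_{a|σ}` of a quantum Mealy machine `(H_in, H_s, U, M)`
with a general (density-operator) input `σ`:
`E_{a|σ}(ρ) = tr_{H_in}[(M_a ⊗ I) U (σ ⊗ ρ) U† (M_a† ⊗ I)]`. -/
noncomputable def stepD {α β O : Type*} [Fintype α] [Fintype β] [DecidableEq β]
    (U : Matrix (α × β) (α × β) ℂ) (M : O → Matrix α α ℂ)
    (σ : Matrix α α ℂ) (a : O) (ρ : Matrix β β ℂ) : Matrix β β ℂ :=
  ptraceIn ((M a ⊗ₖ (1 : Matrix β β ℂ)) * U * (σ ⊗ₖ ρ) * Uᴴ *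
    ((M a)ᴴ ⊗ₖ (1 : Matrix β β ℂ)))

/-- One-step super-operator `E_{a,φ}` with a pure input state `|φ⟩`. -/
noncomputable def stepP {α β O : Type*} [Fintype α] [Fintype β] [DecidableEq β]
    (U : Matrix (α × β) (α × β) ℂ) (M : O → Matrix α α ℂ)
    (φ : α → ℂ) (a : O) (ρ : Matrix β β ℂ) : Matrix β β ℂ :=
  stepD U M (vecMulVec φ (star φ)) a ρ

/-- `E_{a|π}` for an input sequence of density operators paired with outcomes. -/
noncomputable def runD {α β O : Type*} [Fintype α] [Fintype β] [DecidableEq β]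
    (U : Matrix (α × β) (α × β) ℂ) (M : O → Matrix α α ℂ)
    (l : List (Matrix α α ℂ × O)) (ρ : Matrix β β ℂ) : Matrix β β ℂ :=
  l.foldl (fun acc p => stepD U M p.1 p.2 acc) ρ

/-- `E_{a|π}` for an input sequence of pure states paired with outcomes. -/
noncomputable def runP {α β O : Type*} [Fintype α] [Fintype β] [DecidableEq β]
    (U : Matrix (α × β) (α × β) ℂ) (M : O → Matrix α α ℂ)
    (l : List ((α → ℂ) × O)) (ρ : Matrix β β ℂ) : Matrix β β ℂ :=
  l.foldl (fun acc p => stepP U M p.1 p.2 acc) ρ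

section Aux

variable {α β O : Type*} [Fintype α] [Fintype β] [DecidableEq β]

lemma ptraceIn_add (A B : Matrix (α × β) (α × β) ℂ) :
    ptraceIn (A + B) = ptraceIn A + ptraceIn B := by
  ext s t; simp [ptraceIn, Finset.sum_add_distrib]

lemma ptraceIn_smul (c : ℂ) (A : Matrix (α × β) (α × β) ℂ) :
    ptraceIn (c • A) = c • ptraceIn A := by
  ext s t; simp [ptraceIn, Finset.mul_sum]

lemma ptraceIn_zero : ptraceIn (0 : Matrix (α × β) (α × β) ℂ) = 0 := by
  ext s t; simp [ptraceIn]

variable (U : Matrix (α × β) (α × β) ℂ) (M : O → Matrix α α ℂ)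

lemma stepD_add_right (σ : Matrix α α ℂ) (a : O) (ρ ρ' : Matrix β β ℂ) :
    stepD U M σ a (ρ + ρ') = stepD U M σ a ρ + stepD U M σ a ρ' := by
  simp [stepD, Matrix.kronecker_add, Matrix.mul_add, Matrix.add_mul, ptraceIn_add]

lemma stepD_smul_right (σ : Matrix α α ℂ) (a : O) (c : ℂ) (ρ : Matrix β β ℂ) :
    stepD U M σ a (c • ρ) = c • stepD U M σ a ρ := by
  simp [stepD, Matrix.kronecker_smul, Matrix.mul_smul, Matrix.smul_mul, ptraceIn_smul]

lemma stepD_add_left (σ σ' : Matrix α α ℂ) (a : O) (ρ : Matrix β β ℂ) :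
    stepD U M (σ + σ') a ρ = stepD U M σ a ρ + stepD U M σ' a ρ := by
  simp [stepD, Matrix.add_kronecker, Matrix.mul_add, Matrix.add_mul, ptraceIn_add]

lemma stepD_smul_left (σ : Matrix α α ℂ) (a : O) (c : ℂ) (ρ : Matrix β β ℂ) :
    stepD U M (c • σ) a ρ = c • stepD U M σ a ρ := by
  simp [stepD, Matrix.smul_kronecker, Matrix.mul_smul, Matrix.smul_mul, ptraceIn_smul]

lemma stepD_zero_left (a : O) (ρ : Matrix β β ℂ) :
    stepD U M (0 : Matrix α α ℂ) a ρ = 0 := by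
  simp [stepD, Matrix.zero_kronecker, Matrix.mul_zero, Matrix.zero_mul, ptraceIn_zero]

/-- `stepD` as a linear map in `ρ`. -/
noncomputable def stepLM (σ : Matrix α α ℂ) (a : O) :
    Matrix β β ℂ →ₗ[ℂ] Matrix β β ℂ where
  toFun := stepD U M σ a
  map_add' := stepD_add_right U M σ a
  map_smul' := fun c ρ => stepD_smul_right U M σ a c ρ

lemma stepLM_add (σ σ' : Matrix α α ℂ) (a : O) :
    stepLM U M (σ + σ') a = stepLM U M σ a + stepLM U M σ' a :=
  LinearMap.ext fun ρ => stepD_add_left U M σ σ' a ρ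

lemma stepLM_smul (c : ℂ) (σ : Matrix α α ℂ) (a : O) :
    stepLM U M (c • σ) a = c • stepLM U M σ a :=
  LinearMap.ext fun ρ => stepD_smul_left U M σ a c ρ

lemma stepLM_zero (a : O) : stepLM U M (0 : Matrix α α ℂ) a = 0 :=
  LinearMap.ext fun ρ => stepD_zero_left U M a ρ

/-- The functional `ρ ↦ tr (E_{a|π} ρ)` as a linear map. -/
noncomputable def Fl : List (Matrix α α ℂ × O) → (Matrix β β ℂ →ₗ[ℂ] ℂ)
  | [] => Matrix.traceLinearMap β ℂ ℂ
  | p :: l => (Fl l).comp (stepLM U M p.1 p.2)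

lemma Fl_apply (l : List (Matrix α α ℂ × O)) (ρ : Matrix β β ℂ) :
    Fl U M l ρ = (runD U M l ρ).trace := by
  induction l generalizing ρ with
  | nil => rfl
  | cons p l ih => exact ih (stepD U M p.1 p.2 ρ)

/-- The span of functionals coming from sequences of length `≤ n` with entries in `B`. -/
noncomputable def Vsub (B : Set (Matrix α α ℂ)) (n : ℕ) :
    Submodule ℂ (Matrix β β ℂ →ₗ[ℂ] ℂ) :=
  Submodule.span ℂ {g | ∃ l : List (Matrix α α ℂ × O),
    (∀ p ∈ l, p.1 ∈ B) ∧ l.length ≤ n ∧ g = Fl U M l}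

lemma Vsub_mono (B : Set (Matrix α α ℂ)) {n m : ℕ} (hnm : n ≤ m) :
    Vsub U M B n ≤ Vsub U M B m :=
  Submodule.span_mono (fun _ ⟨l, h1, h2, h3⟩ => ⟨l, h1, h2.trans hnm, h3⟩)

lemma comp_mem_Vsub_of_mem (B : Set (Matrix α α ℂ)) {n : ℕ} {a : O}
    {σ : Matrix α α ℂ} (hσ : σ ∈ B) {g : Matrix β β ℂ →ₗ[ℂ] ℂ}
    (hg : g ∈ Vsub U M B n) :
    g.comp (stepLM U M σ a) ∈ Vsub U M B (n + 1) := by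
  induction hg using Submodule.span_induction with
  | mem g hg =>
    obtain ⟨l, h1, h2, rfl⟩ := hg
    refine Submodule.subset_span ⟨(σ, a) :: l, ?_, by simpa using h2, rfl⟩
    intro p hp
    rcases List.mem_cons.mp hp with hh | hh
    · rw [hh]; exact hσ
    · exact h1 p hh
  | zero => simpa [LinearMap.zero_comp] using (Vsub U M B (n+1)).zero_mem
  | add x y _ _ hx hy => simpa [LinearMap.add_comp] using add_mem hx hy
  | smul c x _ hx => simpa [LinearMap.smul_comp] using Submodule.smul_mem _ c hx

lemma comp_mem_Vsub (B : Set (Matrix α α ℂ)) {n : ℕ} {a : O}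
    {σ : Matrix α α ℂ} (hσ : σ ∈ Submodule.span ℂ B) {g : Matrix β β ℂ →ₗ[ℂ] ℂ}
    (hg : g ∈ Vsub U M B n) :
    g.comp (stepLM U M σ a) ∈ Vsub U M B (n + 1) := by
  induction hσ using Submodule.span_induction with
  | mem σ hσ => exact comp_mem_Vsub_of_mem U M B hσ hg
  | zero => simpa [stepLM_zero, LinearMap.comp_zero] using (Vsub U M B (n+1)).zero_mem
  | add x y _ _ hx hy =>
    simpa [stepLM_add, LinearMap.comp_add] using add_mem hx hy
  | smul c x _ hx =>
    simpa [stepLM_smul, LinearMap.comp_smul] using Submodule.smul_mem _ c hx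

lemma Vsub_descend (B : Set (Matrix α α ℂ)) {n : ℕ}
    (hle : Vsub U M B (n + 1) ≤ Vsub U M B n) :
    Vsub (O := O) U M B (n + 2) ≤ Vsub U M B (n + 1) := by
  rw [Vsub, Submodule.span_le]
  rintro g ⟨l, hBl, hlen, rfl⟩
  cases l with
  | nil => exact Submodule.subset_span ⟨[], by simp, by simp, rfl⟩
  | cons p l =>
    have h1 : Fl U M l ∈ Vsub U M B n := by
      refine hle (Submodule.subset_span ⟨l, fun q hq => hBl q (List.mem_cons_of_mem _ hq),
        ?_, rfl⟩)
      simpa using hlen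
    exact comp_mem_Vsub U M B
      (Submodule.subset_span (hBl p List.mem_cons_self)) h1

lemma Vsub_stable (B : Set (Matrix α α ℂ)) {k : ℕ}
    (hk : Vsub U M B (k + 1) ≤ Vsub U M B k) :
    ∀ n, Vsub (O := O) U M B n ≤ Vsub U M B k := by
  have P : ∀ j, Vsub (O := O) U M B (k + j + 1) ≤ Vsub U M B (k + j) := by
    intro j
    induction j with
    | zero => exact hk
    | succ j ih => exact Vsub_descend U M B ih
  have Q : ∀ j, Vsub (O := O) U M B (k + j) ≤ Vsub U M B k := by
    intro j
    induction j with
    | zero => exact le_rfl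
    | succ j ih => exact (P j).trans ih
  intro n
  rcases le_or_gt n k with hnk | hnk
  · exact Vsub_mono U M B hnk
  · obtain ⟨j, rfl⟩ := Nat.exists_eq_add_of_le hnk.le
    exact Q j

end Aux

/-- If `ρ = ρ₁ − ρ₂` has `tr(E_{a|π}(ρ)) = 0` for all input sequences `π` drawn from a
spanning set `B` of density operators with `|π| ≤ d² − 1` and all output sequences `a`,
then `ρ₁` and `ρ₂` give the same output probabilities for every input sequence. -/
theorem zero_on_short_basis_seqs_implies_equiv (di ds : ℕ) (O : Type) [Fintype O]
    (U : Matrix (Fin di × Fin ds) (Fin di × Fin ds) ℂ)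
    (hU : U ∈ Matrix.unitaryGroup (Fin di × Fin ds) ℂ)
    (M : O → Matrix (Fin di) (Fin di) ℂ) (hM : ∑ a, (M a)ᴴ * M a = 1)
    (B : Set (Matrix (Fin di) (Fin di) ℂ))
    (hB : ∀ σ ∈ B, σ.PosSemidef ∧ σ.trace = 1)
    (hBspan : ∀ σ : Matrix (Fin di) (Fin di) ℂ, σ.PosSemidef → σ.trace = 1 →
      σ ∈ Submodule.span ℂ B)
    (ρ₁ ρ₂ : Matrix (Fin ds) (Fin ds) ℂ)
    (hρ₁ : ρ₁.PosSemidef) (ht₁ : ρ₁.trace = 1)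
    (hρ₂ : ρ₂.PosSemidef) (ht₂ : ρ₂.trace = 1)
    (h : ∀ l : List (Matrix (Fin di) (Fin di) ℂ × O),
      (∀ p ∈ l, p.1 ∈ B) → l.length ≤ ds ^ 2 - 1 →
      (runD U M l (ρ₁ - ρ₂)).trace = 0) :
    ∀ l : List (Matrix (Fin di) (Fin di) ℂ × O),
      (∀ p ∈ l, p.1.PosSemidef ∧ p.1.trace = 1) →
      (runD U M l ρ₁).trace = (runD U M l ρ₂).trace := by
  intro l hl
  rcases Nat.eq_zero_or_pos ds with hds | hds
  · subst hds
    simp [Matrix.trace] at ht₁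
  set N := ds ^ 2 with hN
  have hN1 : 1 ≤ N := Nat.one_le_iff_ne_zero.mpr (by positivity)
  have hfr : Module.finrank ℂ (Matrix (Fin ds) (Fin ds) ℂ →ₗ[ℂ] ℂ) = N := by
    rw [Module.finrank_linearMap_self]
    simp [Module.finrank_matrix, hN, sq]
  have htr_mem : Matrix.traceLinearMap (Fin ds) ℂ ℂ ∈ Vsub U M B 0 :=
    Submodule.subset_span ⟨[], by simp, by simp, rfl⟩
  have htr_ne : Matrix.traceLinearMap (Fin ds) ℂ ℂ ≠ 0 := by
    intro h0
    have h1 := congrArg (fun f : Matrix (Fin ds) (Fin ds) ℂ →ₗ[ℂ] ℂ =>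
      f (1 : Matrix (Fin ds) (Fin ds) ℂ)) h0
    simp [Matrix.traceLinearMap, Matrix.trace_one] at h1
    have : ds = 0 := by exact_mod_cast h1
    omega
  have hstab : ∃ k, k ≤ N - 1 ∧ Vsub U M B (k + 1) ≤ Vsub U M B k := by
    by_contra hcon
    push_neg at hcon
    have hlt : ∀ k, k ≤ N - 1 → Vsub U M B k < Vsub U M B (k + 1) := fun k hk =>
      lt_of_le_of_ne (Vsub_mono U M B (Nat.le_succ k))
        (fun he => hcon k hk (le_of_eq he.symm))
    have hrank : ∀ k, k ≤ N → k + 1 ≤ Module.finrank ℂ (Vsub (O := O) U M B k) := by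
      intro k
      induction k with
      | zero =>
        intro _
        have hne : Vsub (O := O) U M B 0 ≠ ⊥ := by
          intro hbot
          exact htr_ne (by simpa [hbot] using htr_mem)
        have hpos : 0 < Module.finrank ℂ (Vsub (O := O) U M B 0) := by
          rcases Nat.eq_zero_or_pos (Module.finrank ℂ (Vsub (O := O) U M B 0)) with h0 | h0
          · exact absurd (Submodule.finrank_eq_zero.mp h0) hne
          · exact h0
        omega
      | succ k ih =>
        intro hk
        have h1 := ih (by omega)
        have h2 := Submodule.finrank_lt_finrank_of_lt (hlt k (by omega))
        omega
    have h1 := hrank N le_rfl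
    have h2 := Submodule.finrank_le (Vsub (O := O) U M B N)
    rw [hfr] at h2
    omega
  obtain ⟨k, hkK, hk⟩ := hstab
  have hall : ∀ n, Vsub (O := O) U M B n ≤ Vsub U M B (N - 1) := fun n =>
    (Vsub_stable U M B hk n).trans (Vsub_mono U M B hkK)
  have hann : ∀ g ∈ Vsub (O := O) U M B (N - 1), g (ρ₁ - ρ₂) = 0 := by
    intro g hg
    induction hg using Submodule.span_induction with
    | mem g hg =>
      obtain ⟨l', h1, h2, rfl⟩ := hg
      rw [Fl_apply]
      exact h l' h1 h2
    | zero => simp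
    | add x y _ _ hx hy => simp [hx, hy]
    | smul c x _ hx => simp [hx]
  have hFl : ∀ l' : List (Matrix (Fin di) (Fin di) ℂ × O),
      (∀ p ∈ l', p.1 ∈ Submodule.span ℂ B) → Fl U M l' ∈ Vsub U M B (N - 1) := by
    intro l' hmem
    induction l' with
    | nil => exact Submodule.subset_span ⟨[], by simp, by simp, rfl⟩
    | cons p t ih =>
      have h1 := ih (fun q hq => hmem q (List.mem_cons_of_mem _ hq))
      have h2 := comp_mem_Vsub U M B (a := p.2) (hmem p List.mem_cons_self) h1
      exact hall (N - 1 + 1) h2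
  have hz : Fl U M l (ρ₁ - ρ₂) = 0 :=
    hann _ (hFl l fun p hp => hBspan p.1 (hl p hp).1 (hl p hp).2)
  rw [← Fl_apply, ← Fl_apply]
  have := map_sub (Fl U M l) ρ₁ ρ₂
  rw [hz] at this
  exact sub_eq_zero.mp this.symm
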